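/- Let p be an odd prime. The set S = {x ∈ ℤ_p | x^(p−1) = 1} of (p−1)-st roots of unity in the ring ℤ_p of p-adic integers is finite with exactly p − 1 elements, and the product of all elements of S equals −1. -/

import Mathlib

open Polynomial

section Aux

variable (p : ℕ) [hp : Fact p.Prime]

lemma aux_toZMod_eq_zero_iff (x : ℤ_[p]) : PadicInt.toZMod x = 0 ↔ ‖x‖ < 1 := by
  rw [← RingHom.mem_ker, PadicInt.ker_toZMod, IsLocalRing.mem_maximalIdeal,
    PadicInt.mem_nonunits]

lemma aux_norm_one_of_root {x : ℤ_[p]} (hx : x ^ (p - 1) = 1) : ‖x‖ = 1 := by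
  have h1 : ‖x‖ ^ (p - 1) = 1 := by
    rw [← norm_pow, hx, norm_one]
  by_contra h
  have hlt : ‖x‖ < 1 := lt_of_le_of_ne (PadicInt.norm_le_one x) h
  have hne : p - 1 ≠ 0 := by have := hp.out.two_le; omega
  have := pow_lt_one₀ (norm_nonneg x) hlt hne
  rw [h1] at this
  exact lt_irrefl 1 this

lemma aux_norm_pred : ‖((p - 1 : ℕ) : ℤ_[p])‖ = 1 := by
  refine le_antisymm (PadicInt.norm_le_one _) ?_
  by_contra h
  push_neg at h
  have h2 : ((p - 1 : ℕ) : ℤ_[p]) = ((p - 1 : ℕ) : ℤ) := by push_cast; ring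
  rw [h2, PadicInt.norm_int_lt_one_iff_dvd] at h
  rw [Int.natCast_dvd_natCast] at h
  have h2p := hp.out.two_le
  have := Nat.le_of_dvd (by omega) h
  omega

/-- Hensel's lemma applied to `X ^ (p-1) - 1`. -/
lemma aux_hensel {a : ℤ_[p]} (ha : ‖a‖ = 1) (ha2 : ‖a ^ (p - 1) - 1‖ < 1) :
    ∃ z : ℤ_[p], z ^ (p - 1) = 1 ∧ ‖z - a‖ < 1 ∧
      ∀ z', z' ^ (p - 1) = 1 → ‖z' - a‖ < 1 → z' = z := by
  have hp2 := hp.out.two_le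
  set F : Polynomial ℤ_[p] := X ^ (p - 1) - C 1 with hF
  have hFeval : ∀ x : ℤ_[p], F.eval x = x ^ (p - 1) - 1 := by
    intro x; simp [hF]
  have hFderiv : F.derivative = C ((p - 1 : ℕ) : ℤ_[p]) * X ^ (p - 1 - 1) := by
    simp [hF, derivative_X_pow]
  have hderiv_eval : ∀ x : ℤ_[p], F.derivative.eval x = ((p - 1 : ℕ) : ℤ_[p]) * x ^ (p - 1 - 1) := by
    intro x; rw [hFderiv]; simp
  have hderiv_norm : ‖F.derivative.eval a‖ = 1 := by
    rw [hderiv_eval, norm_mul, norm_pow, aux_norm_pred, ha, one_pow, one_mul]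
  have hnorm : ‖F.eval a‖ < ‖F.derivative.eval a‖ ^ 2 := by
    rw [hFeval, hderiv_norm, one_pow]; exact ha2
  obtain ⟨z, hz1, hz2, hz3, hz4⟩ := hensels_lemma hnorm
  simp only [Polynomial.coe_aeval_eq_eval] at hz1 hz2 hz3 hz4
  rw [hFeval, sub_eq_zero] at hz1
  rw [hderiv_norm] at hz2
  refine ⟨z, hz1, hz2, fun z' h1 h2 => ?_⟩
  apply hz4
  · rw [hFeval, h1, sub_self]
  · rw [hderiv_norm]; exact h2

lemma aux_inj : Set.InjOn PadicInt.toZMod {x : ℤ_[p] | x ^ (p - 1) = 1} := by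
  intro x hx y hy hxy
  simp only [Set.mem_setOf_eq] at hx hy
  have hnx : ‖x‖ = 1 := aux_norm_one_of_root p hx
  have hx2 : ‖x ^ (p - 1) - 1‖ < 1 := by rw [hx, sub_self, norm_zero]; norm_num
  obtain ⟨z, hz1, hz2, hz3⟩ := aux_hensel p hnx hx2
  have h1 : x = z := hz3 x hx (by rw [sub_self, norm_zero]; norm_num)
  have h2 : y = z := by
    apply hz3 y hy
    rw [← aux_toZMod_eq_zero_iff, map_sub, hxy, sub_self]
  rw [h1, h2]

lemma aux_surj (k : ZMod p) (hk : k ≠ 0) :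
    ∃ x : ℤ_[p], x ^ (p - 1) = 1 ∧ PadicInt.toZMod x = k := by
  set a : ℤ_[p] := (k.val : ℤ_[p]) with haa
  have hta : PadicInt.toZMod a = k := by
    rw [haa, map_natCast, ZMod.natCast_val, ZMod.cast_id]
  have hna : ‖a‖ = 1 := by
    refine le_antisymm (PadicInt.norm_le_one _) ?_
    by_contra h
    push_neg at h
    rw [← aux_toZMod_eq_zero_iff, hta] at h
    exact hk h
  have ha2 : ‖a ^ (p - 1) - 1‖ < 1 := by
    rw [← aux_toZMod_eq_zero_iff, map_sub, map_pow, map_one, hta,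
      ZMod.pow_card_sub_one_eq_one hk, sub_self]
  obtain ⟨z, hz1, hz2, -⟩ := aux_hensel p hna ha2
  refine ⟨z, hz1, ?_⟩
  have : PadicInt.toZMod (z - a) = 0 := (aux_toZMod_eq_zero_iff p _).mpr hz2
  rw [map_sub, hta, sub_eq_zero] at this
  exact this

end Aux

/-- Let `p` be an odd prime.  The set `S = {x ∈ ℤ_p | x ^ (p - 1) = 1}` of
`(p-1)`-st roots of unity in the `p`-adic integers is finite with exactly `p - 1` elements,
and the product of all of its elements equals `-1`. -/
theorem stmt1 (p : ℕ) [hp : Fact p.Prime] (hodd : Odd p) :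
    ∃ hfin : ({x : ℤ_[p] | x ^ (p - 1) = 1}).Finite,
      hfin.toFinset.card = p - 1 ∧ (∏ x ∈ hfin.toFinset, x) = -1 := by
  classical
  have hp2 := hp.out.two_le
  have hp3 : 3 ≤ p := by
    have hne2 : p ≠ 2 := by rintro rfl; revert hodd; decide
    omega
  have heven : Even (p - 1) := Nat.Odd.sub_odd hodd odd_one
  -- finiteness
  have hFne : (X ^ (p - 1) - C (1 : ℤ_[p])) ≠ 0 :=
    (Polynomial.monic_X_pow_sub_C 1 (show p - 1 ≠ 0 by omega)).ne_zero
  have hset : {x : ℤ_[p] | x ^ (p - 1) = 1} =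
      {x : ℤ_[p] | (X ^ (p - 1) - C (1 : ℤ_[p])).IsRoot x} := by
    ext x
    simp [Polynomial.IsRoot, sub_eq_zero]
  have hfin : ({x : ℤ_[p] | x ^ (p - 1) = 1}).Finite := by
    rw [hset]; exact Polynomial.finite_setOf_isRoot hFne
  refine ⟨hfin, ?_, ?_⟩
  · -- cardinality
    set T := hfin.toFinset with hT
    have hmemT : ∀ x : ℤ_[p], x ∈ T ↔ x ^ (p - 1) = 1 := by
      intro x; simp [hT]
    have himg : T.image PadicInt.toZMod = Finset.univ.erase (0 : ZMod p) := by
      ext k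
      simp only [Finset.mem_image, Finset.mem_erase, Finset.mem_univ, and_true]
      constructor
      · rintro ⟨x, hx, rfl⟩
        rw [hmemT] at hx
        rw [Ne, aux_toZMod_eq_zero_iff, aux_norm_one_of_root p hx]
        norm_num
      · intro hk
        obtain ⟨x, hx1, hx2⟩ := aux_surj p k hk
        exact ⟨x, (hmemT x).mpr hx1, hx2⟩
    have hinj := aux_inj p
    have hcard : T.card = (T.image PadicInt.toZMod).card := by
      rw [Finset.card_image_of_injOn]
      intro x hx y hy
      exact hinj (by simpa using (hmemT x).mp hx) (by simpa using (hmemT y).mp hy)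
    rw [hcard, himg, Finset.card_erase_of_mem (Finset.mem_univ _), Finset.card_univ,
      ZMod.card]
  · -- product
    set T := hfin.toFinset with hT
    have hmemT : ∀ x : ℤ_[p], x ∈ T ↔ x ^ (p - 1) = 1 := by
      intro x; simp [hT]
    have hneg : (-1 : ℤ_[p]) ∈ T := by
      rw [hmemT, heven.neg_one_pow]
    have hmul : ∀ a : ℤ_[p], a ^ (p - 1) = 1 → a * a ^ (p - 2) = 1 := by
      intro a ha
      have : a * a ^ (p - 2) = a ^ (p - 1) := by
        rw [← pow_succ']
        congr 1
        omega
      rw [this, ha]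
    have hpow_mem : ∀ a : ℤ_[p], a ^ (p - 1) = 1 → (a ^ (p - 2)) ^ (p - 1) = 1 := by
      intro a ha
      rw [← pow_mul, mul_comm, pow_mul, ha, one_pow]
    have hprod_erase : ∏ x ∈ T.erase (-1), x = 1 := by
      refine Finset.prod_involution (fun a _ => a ^ (p - 2)) ?_ ?_ ?_ ?_
      · intro a ha
        exact hmul a ((hmemT a).mp (Finset.mem_of_mem_erase ha))
      · -- a ≠ 1 → a ^ (p-2) ≠ a
        intro a ha hne1 heq
        beta_reduce at heq
        have haT : a ^ (p - 1) = 1 := (hmemT a).mp (Finset.mem_of_mem_erase ha)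
        have h2 : a * a ^ (p - 2) = 1 := hmul a haT
        rw [heq] at h2
        rcases mul_self_eq_one_iff.mp h2 with h | h
        · exact hne1 h
        · exact (Finset.ne_of_mem_erase ha) h
      · -- g maps into the set
        intro a ha
        beta_reduce
        have haT : a ^ (p - 1) = 1 := (hmemT a).mp (Finset.mem_of_mem_erase ha)
        refine Finset.mem_erase.mpr ⟨?_, (hmemT _).mpr (hpow_mem a haT)⟩
        intro h
        have := hmul a haT
        rw [h, mul_neg_one, neg_eq_iff_eq_neg] at this
        exact (Finset.ne_of_mem_erase ha) this
      · -- involution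
        intro a ha
        beta_reduce
        have haT : a ^ (p - 1) = 1 := (hmemT a).mp (Finset.mem_of_mem_erase ha)
        rw [← pow_mul]
        have hk : (p - 2) * (p - 2) = (p - 1) * (p - 3) + 1 := by
          have : 3 ≤ p := hp3
          nlinarith [Nat.sub_add_cancel (show 1 ≤ p by omega),
            Nat.sub_add_cancel (show 2 ≤ p by omega),
            Nat.sub_add_cancel (show 3 ≤ p by omega)]
        rw [hk, pow_succ, pow_mul, haT, one_pow, one_mul]
    have := Finset.mul_prod_erase T id hneg
    simp only [id] at this
    rw [← this, hprod_erase, mul_one]
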